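/- arXiv:2603.17902 — 2 statements merged into one kernel-verified Lean document; each statement's English description precedes it below -/
import Mathlib

section
/- Combining the softmax sensitivity bound with composition: if the per-token logit sensitivity is bounded by Δ (i.e., |ℓ_D(w,h) - ℓ_{D'}(w,h)| ≤ Δ for all tokens w and histories h) and tokens are generated by temperature-T softmax autoregressively for L steps, then the message-level distribution satisfies P_D(m) ≤ exp(2ΔL/T) · P_{D'}(m) for every message m of length L. -/
lemma softmax_ratio_bound {V : Type*} [Fintype V] [Nonempty V]
    (T Δ : ℝ) (hT : 0 < T) (hΔ : 0 ≤ Δ) (f g : V → ℝ)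
    (hs : ∀ w, |f w - g w| ≤ Δ) (w : V) :
    Real.exp (f w / T) / (∑ u, Real.exp (f u / T)) ≤
      Real.exp (2 * Δ / T) * (Real.exp (g w / T) / (∑ u, Real.exp (g u / T))) := by
  have hsum : ∀ h : V → ℝ, 0 < ∑ u, Real.exp (h u / T) := fun h =>
    Finset.sum_pos (fun u _ => Real.exp_pos _) Finset.univ_nonempty
  have h1 : Real.exp (f w / T) ≤ Real.exp (Δ / T) * Real.exp (g w / T) := by
    rw [← Real.exp_add]
    apply Real.exp_le_exp.2
    have := (abs_le.1 (hs w)).2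
    rw [← add_div]
    exact div_le_div_of_nonneg_right (by linarith) hT.le
  have h2 : ∑ u, Real.exp (g u / T) ≤ Real.exp (Δ / T) * ∑ u, Real.exp (f u / T) := by
    rw [Finset.mul_sum]
    apply Finset.sum_le_sum
    intro u _
    rw [← Real.exp_add]
    apply Real.exp_le_exp.2
    have := (abs_le.1 (hs u)).1
    rw [← add_div]
    exact div_le_div_of_nonneg_right (by linarith) hT.le
  have hfpos := hsum f
  have hgpos := hsum g
  rw [div_le_iff₀ hfpos]
  calc Real.exp (f w / T)
      ≤ Real.exp (Δ / T) * Real.exp (g w / T) := h1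
    _ = Real.exp (Δ / T) * (Real.exp (g w / T) / (∑ u, Real.exp (g u / T))) *
          (∑ u, Real.exp (g u / T)) := by field_simp
    _ ≤ Real.exp (Δ / T) * (Real.exp (g w / T) / (∑ u, Real.exp (g u / T))) *
          (Real.exp (Δ / T) * ∑ u, Real.exp (f u / T)) := by
        apply mul_le_mul_of_nonneg_left h2
        positivity
    _ = Real.exp (2 * Δ / T) * (Real.exp (g w / T) / (∑ u, Real.exp (g u / T))) *
          (∑ u, Real.exp (f u / T)) := by
        rw [two_mul, add_div, Real.exp_add]; ring

/-- Message-level privacy bound: logit sensitivity `Δ` plus temperature-`T` softmax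
decoding over `L` autoregressive steps gives `P_D(m) ≤ exp (2ΔL/T) · P_{D'}(m)`. -/
theorem message_level_softmax_privacy_bound
    {V : Type*} [Fintype V] [Nonempty V]
    (L : ℕ) (hL : 1 ≤ L) (T Δ : ℝ) (hT : 0 < T) (hΔ : 0 ≤ Δ)
    (ℓD ℓD' : (k : Fin L) → ((Fin (k : ℕ) → V) → V → ℝ))
    (hsens : ∀ k h w, |ℓD k h w - ℓD' k h w| ≤ Δ) :
    ∀ m : Fin L → V,
      (∏ k : Fin L,
          Real.exp (ℓD k (fun j => m (Fin.castLE k.isLt.le j)) (m k) / T) /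
            (∑ u : V, Real.exp (ℓD k (fun j => m (Fin.castLE k.isLt.le j)) u / T))) ≤
        Real.exp (2 * Δ * L / T) *
          ∏ k : Fin L,
            Real.exp (ℓD' k (fun j => m (Fin.castLE k.isLt.le j)) (m k) / T) /
              (∑ u : V, Real.exp (ℓD' k (fun j => m (Fin.castLE k.isLt.le j)) u / T)) := by
  intro m
  have key : ∀ k : Fin L,
      Real.exp (ℓD k (fun j => m (Fin.castLE k.isLt.le j)) (m k) / T) /
        (∑ u : V, Real.exp (ℓD k (fun j => m (Fin.castLE k.isLt.le j)) u / T)) ≤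
      Real.exp (2 * Δ / T) *
        (Real.exp (ℓD' k (fun j => m (Fin.castLE k.isLt.le j)) (m k) / T) /
          (∑ u : V, Real.exp (ℓD' k (fun j => m (Fin.castLE k.isLt.le j)) u / T))) := by
    intro k
    exact softmax_ratio_bound T Δ hT hΔ _ _ (fun w => hsens k _ w) (m k)
  calc (∏ k : Fin L,
          Real.exp (ℓD k (fun j => m (Fin.castLE k.isLt.le j)) (m k) / T) /
            (∑ u : V, Real.exp (ℓD k (fun j => m (Fin.castLE k.isLt.le j)) u / T)))
      ≤ ∏ k : Fin L, Real.exp (2 * Δ / T) *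
          (Real.exp (ℓD' k (fun j => m (Fin.castLE k.isLt.le j)) (m k) / T) /
            (∑ u : V, Real.exp (ℓD' k (fun j => m (Fin.castLE k.isLt.le j)) u / T))) := by
        apply Finset.prod_le_prod
        · intro k _; positivity
        · intro k _; exact key k
    _ = Real.exp (2 * Δ * L / T) *
          ∏ k : Fin L,
            Real.exp (ℓD' k (fun j => m (Fin.castLE k.isLt.le j)) (m k) / T) /
              (∑ u : V, Real.exp (ℓD' k (fun j => m (Fin.castLE k.isLt.le j)) u / T)) := by
        rw [Finset.prod_mul_distrib, Finset.prod_const, Finset.card_univ, Fintype.card_fin,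
          ← Real.exp_nat_mul]
        congr 2
        ring
end

section
/- If for every T > 0 the covariance Cov_{π_T}(ν, U) under the Gibbs distribution π_T(m) = exp(U(m)/T)/Z(T) is nonnegative, then the expected utility E(T) = E_{π_T}[ν] is nonincreasing in T on (0,∞). -/
open Finset

lemma gibbs_hasDerivAt {M : Type*} [Fintype M] [Nonempty M]
    (U ν : M → ℝ) (β : ℝ) :
    HasDerivAt (fun b : ℝ => (∑ m : M, ν m * Real.exp (b * U m)) /
        (∑ m : M, Real.exp (b * U m)))
      (((∑ m : M, ν m * (U m * Real.exp (β * U m))) * (∑ m : M, Real.exp (β * U m)) -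
        (∑ m : M, ν m * Real.exp (β * U m)) * (∑ m : M, U m * Real.exp (β * U m))) /
        (∑ m : M, Real.exp (β * U m))^2) β := by
  have hZpos : 0 < ∑ m : M, Real.exp (β * U m) :=
    Finset.sum_pos (fun m _ => Real.exp_pos _) Finset.univ_nonempty
  have hexp : ∀ m : M, HasDerivAt (fun b : ℝ => Real.exp (b * U m))
      (U m * Real.exp (β * U m)) β := by
    intro m
    have h := (hasDerivAt_mul_const (U m) (x := β)).exp
    simpa [mul_comm] using h
  have hN : HasDerivAt (fun b : ℝ => ∑ m : M, ν m * Real.exp (b * U m))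
      (∑ m : M, ν m * (U m * Real.exp (β * U m))) β := by
    apply HasDerivAt.fun_sum
    intro m _
    exact (hexp m).const_mul (ν m)
  have hZ : HasDerivAt (fun b : ℝ => ∑ m : M, Real.exp (b * U m))
      (∑ m : M, U m * Real.exp (β * U m)) β := by
    apply HasDerivAt.fun_sum
    intro m _
    exact hexp m
  exact hN.div hZ (ne_of_gt hZpos)

/-- If the covariance of the utility `ν` and the cumulative logit score `U` under the
Gibbs distribution is nonnegative for every temperature, then the expected utility is
nonincreasing in the temperature on `(0, ∞)`. -/
theorem gibbs_expected_utility_antitone_of_cov_nonneg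
    {M : Type*} [Fintype M] [Nonempty M]
    (U ν : M → ℝ)
    (hcov : ∀ T : ℝ, 0 < T →
      0 ≤ (∑ m : M, ν m * U m * (Real.exp (U m / T) / ∑ m' : M, Real.exp (U m' / T))) -
          (∑ m : M, ν m * (Real.exp (U m / T) / ∑ m' : M, Real.exp (U m' / T))) *
            (∑ m : M, U m * (Real.exp (U m / T) / ∑ m' : M, Real.exp (U m' / T)))) :
    AntitoneOn
      (fun T : ℝ =>
        ∑ m : M, ν m * (Real.exp (U m / T) / ∑ m' : M, Real.exp (U m' / T)))
      (Set.Ioi 0) := by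
  set f : ℝ → ℝ := fun b : ℝ => (∑ m : M, ν m * Real.exp (b * U m)) /
      (∑ m : M, Real.exp (b * U m)) with hf
  -- f is monotone on (0, ∞)
  have hmono : MonotoneOn f (Set.Ioi 0) := by
    apply monotoneOn_of_deriv_nonneg (convex_Ioi 0)
    · exact Continuous.continuousOn (by
        apply Continuous.div
        · exact continuous_finset_sum _ (fun m _ => by fun_prop)
        · exact continuous_finset_sum _ (fun m _ => by fun_prop)
        · intro b
          exact ne_of_gt (Finset.sum_pos (fun m _ => Real.exp_pos _) Finset.univ_nonempty))
    · intro β hβ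
      exact ((gibbs_hasDerivAt U ν β).differentiableAt).differentiableWithinAt
    · intro β hβ
      rw [interior_Ioi] at hβ
      have hβ0 : (0:ℝ) < β := hβ
      rw [(gibbs_hasDerivAt U ν β).deriv]
      have hZpos : 0 < ∑ m : M, Real.exp (β * U m) :=
        Finset.sum_pos (fun m _ => Real.exp_pos _) Finset.univ_nonempty
      have h := hcov (1/β) (by positivity)
      have hrw : ∀ m : M, U m / (1/β) = β * U m := by
        intro m; field_simp
      simp only [hrw] at h
      set Z : ℝ := ∑ m : M, Real.exp (β * U m)
      have h1 : (∑ m : M, ν m * U m * (Real.exp (β * U m) / Z)) =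
          (∑ m : M, ν m * (U m * Real.exp (β * U m))) / Z := by
        rw [Finset.sum_div]; congr 1; ext m; ring
      have h2 : (∑ m : M, ν m * (Real.exp (β * U m) / Z)) =
          (∑ m : M, ν m * Real.exp (β * U m)) / Z := by
        rw [Finset.sum_div]; congr 1; ext m; ring
      have h3 : (∑ m : M, U m * (Real.exp (β * U m) / Z)) =
          (∑ m : M, U m * Real.exp (β * U m)) / Z := by
        rw [Finset.sum_div]; congr 1; ext m; ring
      rw [h1, h2, h3] at h
      have : ((∑ m : M, ν m * (U m * Real.exp (β * U m))) * Z -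
          (∑ m : M, ν m * Real.exp (β * U m)) * (∑ m : M, U m * Real.exp (β * U m))) / Z^2 =
          (∑ m : M, ν m * (U m * Real.exp (β * U m))) / Z -
          (∑ m : M, ν m * Real.exp (β * U m)) / Z *
            ((∑ m : M, U m * Real.exp (β * U m)) / Z) := by
        rw [sq, eq_sub_iff_add_eq, div_mul_div_comm, ← add_div, sub_add_cancel,
          mul_div_mul_right _ _ hZpos.ne']
      rw [this]
      exact h
  -- the expected utility equals f ∘ (1/T)
  have hE : ∀ T : ℝ, 0 < T →
      (∑ m : M, ν m * (Real.exp (U m / T) / ∑ m' : M, Real.exp (U m' / T))) = f (1/T) := by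
    intro T hT
    have hrw : ∀ m : M, U m / T = (1/T) * U m := by
      intro m; field_simp
    simp only [hf, hrw]
    rw [Finset.sum_div]
    congr 1; ext m; ring
  intro a ha b hb hab
  simp only [Set.mem_Ioi] at ha hb
  dsimp only
  rw [hE a ha, hE b hb]
  apply hmono (Set.mem_Ioi.mpr (by positivity)) (Set.mem_Ioi.mpr (by positivity))
  exact one_div_le_one_div_of_le ha hab
end
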